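/- Let (X,d) be a metric space, Ω ⊂ X a bounded set, D ⊂ X a nonempty set, and u : X → ℝ a continuous function. Define the 1-contact star set R₁*(D,Ω,u) := { x ∈ closure(Ω) : ∃ y ∈ D, inf_{z ∈ closure(Ω)} (u(z) + d(z,y)) = u(x) + d(x,y) }. Then u is 1-Lipschitz on R₁*(D,Ω,u), i.e. for all x, x' ∈ R₁*(D,Ω,u), |u(x) - u(x')| ≤ d(x,x'). -/
import Mathlib

/-- On the 1-contact star set `R₁*(D,Ω,u)`, the function `u` is 1-Lipschitz.
A point `x` belongs to the contact set iff `x ∈ closure Ω` and there is a vertex `y ∈ D`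
such that `x` minimizes `z ↦ u z + dist z y` over `closure Ω` (i.e. the infimum is
attained at `x`). -/
theorem contact_set_one_lipschitz {X : Type*} [MetricSpace X]
    (Ω D : Set X) (hΩ : Bornology.IsBounded Ω) (hD : D.Nonempty)
    (u : X → ℝ) (hu : Continuous u) :
    ∀ x ∈ {x | x ∈ closure Ω ∧ ∃ y ∈ D, ∀ z ∈ closure Ω, u x + dist x y ≤ u z + dist z y},
    ∀ x' ∈ {x | x ∈ closure Ω ∧ ∃ y ∈ D, ∀ z ∈ closure Ω, u x + dist x y ≤ u z + dist z y},
      |u x - u x'| ≤ dist x x' := by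
  rintro x ⟨hx, y, hy, hmin⟩ x' ⟨hx', y', hy', hmin'⟩
  rw [abs_sub_le_iff]
  constructor
  · have h1 := hmin x' hx'
    have h2 : dist x' y ≤ dist x' x + dist x y := dist_triangle _ _ _
    have : dist x' x = dist x x' := dist_comm _ _
    linarith
  · have h1 := hmin' x hx
    have h2 : dist x y' ≤ dist x x' + dist x' y' := dist_triangle _ _ _
    linarith
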